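/- Let V be a 2-dimensional vector space over a field k. For i = 1,2,3, let vᵢ be nonzero vectors in V and λᵢ nonzero forms in V* with λᵢ(vᵢ) = 0, and set μᵢ = (a ↦ λᵢ(a(vᵢ))), a linear form on L(V). Then the following are equivalent: (1) the vᵢ are pairwise non-colinear; (2) the λᵢ are pairwise non-colinear; (3) μ₁, μ₂, μ₃ are linearly independent; (4) (μ₁, μ₂, μ₃) is a basis of the subspace of L(V)* of forms vanishing on the identity. -/

import Mathlib

/-- A nonzero linear functional on a finite-dimensional space has a kernel of
codimension one. -/
lemma stmt15_ker_rank {k W : Type*} [Field k] [AddCommGroup W] [Module k W]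
    [FiniteDimensional k W] (φ : Module.Dual k W) (hφ : φ ≠ 0) :
    Module.finrank k (LinearMap.ker φ) + 1 = Module.finrank k W := by
  have hrange : LinearMap.range φ = ⊤ := by
    rw [LinearMap.range_eq_top]
    obtain ⟨y, hy⟩ := DFunLike.ne_iff.mp hφ
    intro c
    refine ⟨(c * (φ y)⁻¹) • y, ?_⟩
    rw [map_smul, smul_eq_mul, mul_assoc, inv_mul_cancel₀ (by simpa using hy), mul_one]
  have h := LinearMap.finrank_range_add_finrank_ker φ
  rw [hrange, finrank_top, Module.finrank_self] at h
  omega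

/-- Kernel of a nonzero functional on a 2-dimensional space is the span of any
nonzero vector it kills. -/
lemma stmt15_aux {k W : Type*} [Field k] [AddCommGroup W] [Module k W]
    [FiniteDimensional k W] (hW : Module.finrank k W = 2)
    (φ : Module.Dual k W) (hφ : φ ≠ 0) (x : W) (hx : x ≠ 0) (hφx : φ x = 0) :
    ∀ y, y ∈ Submodule.span k {x} ↔ φ y = 0 := by
  have hker : Module.finrank k (LinearMap.ker φ) = 1 := by
    have := stmt15_ker_rank φ hφ
    omega
  have hle : Submodule.span k {x} ≤ LinearMap.ker φ := by
    rw [Submodule.span_le, Set.singleton_subset_iff]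
    exact LinearMap.mem_ker.mpr hφx
  have heq : Submodule.span k {x} = LinearMap.ker φ :=
    Submodule.eq_of_le_of_finrank_eq hle (by rw [finrank_span_singleton hx, hker])
  intro y
  rw [heq, LinearMap.mem_ker]

/-- Three independent vectors in a 3-dimensional submodule form a basis. -/
lemma stmt15_basis {k W : Type*} [Field k] [AddCommGroup W] [Module k W]
    [FiniteDimensional k W] (K : Submodule k W) (hKrank : Module.finrank k K = 3)
    (μ : Fin 3 → W) (hmem : ∀ i, μ i ∈ K) :
    LinearIndependent k μ ↔ ∃ b : Module.Basis (Fin 3) k K, ∀ i, (b i : W) = μ i := by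
  constructor
  · intro h3
    set μ' : Fin 3 → K := fun i => ⟨μ i, hmem i⟩ with hμ'
    have hli : LinearIndependent k μ' := LinearIndependent.of_comp K.subtype
      (by rw [show (⇑K.subtype ∘ μ') = μ from funext fun i => rfl]; exact h3)
    refine ⟨basisOfLinearIndependentOfCardEqFinrank hli (by rw [hKrank]; simp), fun i => ?_⟩
    rw [coe_basisOfLinearIndependentOfCardEqFinrank]
  · rintro ⟨b, hb⟩
    have h2 := b.linearIndependent.map' K.subtype K.ker_subtype
    rwa [show (⇑K.subtype ∘ ⇑b) = μ from funext fun i => hb i] at h2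

/-- Equivalent conditions for rank-one forms to give a basis of `Q*`.
`V` is 2-dimensional; `vᵢ` are nonzero vectors, `λᵢ` nonzero forms with
`λᵢ(vᵢ) = 0`, and `μᵢ(a) = λᵢ(a vᵢ)`. The dual `Q*` of `Q = L(V)/kI` is
identified with the subspace of forms on `L(V)` vanishing at the identity. -/
theorem stmt15 (k V : Type*) [Field k] [AddCommGroup V] [Module k V]
    [FiniteDimensional k V] (hdim : Module.finrank k V = 2)
    (v : Fin 3 → V) (lam : Fin 3 → Module.Dual k V)
    (hv : ∀ i, v i ≠ 0) (hlam : ∀ i, lam i ≠ 0)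
    (hzero : ∀ i, lam i (v i) = 0)
    (μ : Fin 3 → Module.Dual k (Module.End k V))
    (hμ : ∀ i (a : Module.End k V), μ i a = lam i (a (v i))) :
    ((∀ i j, i ≠ j → v i ∉ Submodule.span k {v j}) ↔
      (∀ i j, i ≠ j → lam i ∉ Submodule.span k {lam j})) ∧
    ((∀ i j, i ≠ j → lam i ∉ Submodule.span k {lam j}) ↔
      LinearIndependent k μ) ∧
    (LinearIndependent k μ ↔
      ∃ b : Module.Basis (Fin 3) k
        (LinearMap.ker ((Module.Dual.eval k (Module.End k V))
          (1 : Module.End k V))),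
        ∀ i, (b i : Module.Dual k (Module.End k V)) = μ i) := by
  have hdual : Module.finrank k (Module.Dual k V) = 2 := by
    rw [Subspace.dual_finrank_eq, hdim]
  -- y ∈ span {v i} ↔ lam i y = 0
  have hA : ∀ i y, y ∈ Submodule.span k {v i} ↔ lam i y = 0 :=
    fun i => stmt15_aux hdim (lam i) (hlam i) (v i) (hv i) (hzero i)
  -- φ ∈ span {lam j} ↔ φ (v j) = 0
  have hB : ∀ j (φ : Module.Dual k V), φ ∈ Submodule.span k {lam j} ↔ φ (v j) = 0 := by
    intro j
    have hev : Module.Dual.eval k V (v j) ≠ 0 := by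
      intro h
      apply hv j
      rw [← Module.forall_dual_apply_eq_zero_iff k (v j)]
      intro φ
      have := DFunLike.congr_fun h φ
      simpa [Module.Dual.eval_apply] using this
    have h2 := stmt15_aux hdual (Module.Dual.eval k V (v j)) hev (lam j) (hlam j)
      (by simp [Module.Dual.eval_apply, hzero j])
    intro φ
    simpa [Module.Dual.eval_apply] using h2 φ
  have h23 : (∀ i j, i ≠ j → lam i ∉ Submodule.span k {lam j}) ↔ LinearIndependent k μ := by
    constructor
    · -- (2) → (3)
      intro h2
      have hnz : ∀ i j, i ≠ j → lam i (v j) ≠ 0 :=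
        fun i j hij h0 => h2 i j hij ((hB j (lam i)).mpr h0)
      rw [Fintype.linearIndependent_iff]
      intro g hg
      have gsimp : ∀ (jj kk : Fin 3),
          g 0 * (lam jj (v 0) * lam 0 (v kk)) + g 1 * (lam jj (v 1) * lam 1 (v kk))
            + g 2 * (lam jj (v 2) * lam 2 (v kk)) = 0 := by
        intro jj kk
        have h := DFunLike.congr_fun hg ((lam jj).smulRight (v kk))
        simpa [Fin.sum_univ_three, hμ, LinearMap.smulRight_apply, map_smul,
          smul_eq_mul] using h
      intro i
      fin_cases i
      · have h := gsimp 1 2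
        rw [hzero 1, hzero 2] at h
        simp only [mul_zero, zero_mul, add_zero] at h
        rcases mul_eq_zero.mp h with h' | h'
        · exact h'
        · rcases mul_eq_zero.mp h' with h'' | h''
          · exact absurd h'' (hnz 1 0 (by decide))
          · exact absurd h'' (hnz 0 2 (by decide))
      · have h := gsimp 2 0
        rw [hzero 0, hzero 2] at h
        simp only [mul_zero, zero_mul, add_zero, zero_add] at h
        rcases mul_eq_zero.mp h with h' | h'
        · exact h'
        · rcases mul_eq_zero.mp h' with h'' | h''
          · exact absurd h'' (hnz 2 1 (by decide))
          · exact absurd h'' (hnz 1 0 (by decide))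
      · have h := gsimp 0 1
        rw [hzero 0, hzero 1] at h
        simp only [mul_zero, zero_mul, add_zero, zero_add] at h
        rcases mul_eq_zero.mp h with h' | h'
        · exact h'
        · rcases mul_eq_zero.mp h' with h'' | h''
          · exact absurd h'' (hnz 0 2 (by decide))
          · exact absurd h'' (hnz 2 1 (by decide))
    · -- (3) → (2)
      intro h3
      by_contra hc
      push_neg at hc
      obtain ⟨i, j, hij, hsp⟩ := hc
      obtain ⟨c, hc⟩ := Submodule.mem_span_singleton.mp hsp
      have hcne : c ≠ 0 := by
        rintro rfl; exact hlam i (by rw [← hc, zero_smul])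
      have hlamivj : lam i (v j) = 0 := by
        rw [← hc]; simp [hzero j]
      have hvj : v j ∈ Submodule.span k {v i} := (hA i (v j)).mpr hlamivj
      obtain ⟨d, hd⟩ := Submodule.mem_span_singleton.mp hvj
      have hμrel : μ j = (d * c⁻¹) • μ i := by
        ext a
        have hlj : lam j = c⁻¹ • lam i := by
          rw [← hc, smul_smul, inv_mul_cancel₀ hcne, one_smul]
        rw [hμ j a, ← hd, map_smul, hlj]
        simp [hμ i a, smul_eq_mul]
        ring
      have hns := h3.notMem_span_image (s := {i}) (x := j) (by simpa using hij.symm)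
      apply hns
      rw [Set.image_singleton, hμrel]
      exact Submodule.smul_mem _ _ (Submodule.mem_span_singleton_self _)
  refine ⟨?_, h23, ?_⟩
  · -- (1) ↔ (2)
    constructor
    · intro h1 i j hij hsp
      have h0 : lam i (v j) = 0 := (hB j (lam i)).mp hsp
      exact h1 j i hij.symm ((hA i (v j)).mpr h0)
    · intro h2 i j hij hsp
      have h0 : lam j (v i) = 0 := (hA j (v i)).mp hsp
      exact h2 j i hij.symm ((hB i (lam j)).mpr h0)
  · -- (3) ↔ (4)
    have hnontriv : Nontrivial V := by
      apply Module.nontrivial_of_finrank_pos (R := k); omega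
    have hone : (1 : Module.End k V) ≠ 0 := by
      obtain ⟨x, hx⟩ := exists_ne (0 : V)
      intro h
      apply hx
      have := DFunLike.congr_fun h x
      simpa using this
    have hev1 : (Module.Dual.eval k (Module.End k V)) (1 : Module.End k V) ≠ 0 := by
      intro h
      apply hone
      rw [← Module.forall_dual_apply_eq_zero_iff k (1 : Module.End k V)]
      intro φ
      have := DFunLike.congr_fun h φ
      simpa [Module.Dual.eval_apply] using this
    have hEnd : Module.finrank k (Module.Dual k (Module.End k V)) = 4 := by
      rw [Subspace.dual_finrank_eq]
      rw [Module.finrank_linearMap, hdim]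
    have hKrank : Module.finrank k
        (LinearMap.ker ((Module.Dual.eval k (Module.End k V))
          (1 : Module.End k V))) = 3 := by
      have := stmt15_ker_rank _ hev1
      omega
    have hμmem : ∀ i, μ i ∈ LinearMap.ker ((Module.Dual.eval k (Module.End k V))
        (1 : Module.End k V)) := by
      intro i
      rw [LinearMap.mem_ker, Module.Dual.eval_apply, hμ]
      simpa using hzero i
    exact stmt15_basis _ hKrank μ hμmem
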